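/- Let σ, τ ∈ S_n and set i = σ⁻¹(n-1), j = τ⁻¹(n-1), a = τ(i), b = σ(j), c = σ(n-1), d = τ(n-1). If i, j, n-1 are pairwise distinct, a ≠ b, and c = d, then hd(σ,τ) = hd(σ^CT, τ^CT). -/

import Mathlib

/-- Hamming distance between two permutations of `Fin n`. -/
def hd {n : ℕ} (σ τ : Equiv.Perm (Fin n)) : ℕ :=
  (Finset.univ.filter fun x => σ x ≠ τ x).card

/-- Contraction of a permutation: delete the symbol `n` (the largest one)
from the cycle decomposition of `σ`. -/
def contract {n : ℕ} (σ : Equiv.Perm (Fin (n + 1))) : Equiv.Perm (Fin n) :=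
  Equiv.removeNone (finSuccEquivLast.permCongr σ)

/-- Extension of a permutation of `Fin n` to a permutation of `Fin (n+1)`
fixing the last symbol. -/
def extendPerm {n : ℕ} (π : Equiv.Perm (Fin n)) : Equiv.Perm (Fin (n + 1)) :=
  finSuccEquivLast.permCongr.symm (Equiv.optionCongr π)

/-- `m`-fold iterated contraction. -/
def contractIter : ∀ (m : ℕ) {n : ℕ}, Equiv.Perm (Fin (n + m)) → Equiv.Perm (Fin n)
  | 0, _, σ => σ
  | m + 1, _, σ => contractIter m (contract σ)

/-- Hamming distance of a permutation array: the minimum Hamming distance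
between distinct elements. -/

lemma contract_castSucc {n : ℕ} (σ : Equiv.Perm (Fin (n+1))) (y : Fin n)
    (h : σ y.castSucc ≠ Fin.last n) :
    (contract σ y).castSucc = σ y.castSucc := by
  obtain ⟨z, hz⟩ := Fin.exists_castSucc_eq.2 h
  have he : (finSuccEquivLast.permCongr σ) (some y) = some z := by
    simp [Equiv.permCongr_apply, ← hz]
  have h2 : some ((Equiv.removeNone (finSuccEquivLast.permCongr σ)) y) = some z :=
    (Equiv.removeNone_some _ ⟨z, he⟩).trans he
  rw [contract, Option.some_inj.1 h2, hz]

lemma contract_of_eq_last {n : ℕ} (σ : Equiv.Perm (Fin (n+1))) (y : Fin n)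
    (h : σ y.castSucc = Fin.last n) :
    (contract σ y).castSucc = σ (Fin.last n) := by
  have hl : σ (Fin.last n) ≠ Fin.last n := by
    intro hc
    exact (Fin.castSucc_lt_last y).ne (σ.injective (h.trans hc.symm))
  obtain ⟨z, hz⟩ := Fin.exists_castSucc_eq.2 hl
  have he : (finSuccEquivLast.permCongr σ) (some y) = none := by
    simp [Equiv.permCongr_apply, h]
  have he2 : (finSuccEquivLast.permCongr σ) none = some z := by
    simp [Equiv.permCongr_apply, ← hz]
  have h2 : some ((Equiv.removeNone (finSuccEquivLast.permCongr σ)) y) = some z :=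
    (Equiv.removeNone_none _ he).trans he2
  rw [contract, Option.some_inj.1 h2, hz]

noncomputable def hdP {n : ℕ} (P : Set (Equiv.Perm (Fin n))) : ℕ :=
  sInf {d | ∃ σ ∈ P, ∃ τ ∈ P, σ ≠ τ ∧ hd σ τ = d}

theorem hd_eq_hd_contract_of (n : ℕ) (σ τ : Equiv.Perm (Fin (n + 1)))
    (hij : σ⁻¹ (Fin.last n) ≠ τ⁻¹ (Fin.last n))
    (hi : σ⁻¹ (Fin.last n) ≠ Fin.last n) (hj : τ⁻¹ (Fin.last n) ≠ Fin.last n)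
    (hab : τ (σ⁻¹ (Fin.last n)) ≠ σ (τ⁻¹ (Fin.last n)))
    (hcd : σ (Fin.last n) = τ (Fin.last n)) :
    hd σ τ = hd (contract σ) (contract τ) := by
  set i := σ⁻¹ (Fin.last n) with hidef
  set j := τ⁻¹ (Fin.last n) with hjdef
  have hσi : σ i = Fin.last n := σ.apply_symm_apply _
  have hτj : τ j = Fin.last n := τ.apply_symm_apply _
  have hτi : τ i ≠ Fin.last n := fun hc => hij (Equiv.Perm.eq_inv_iff_eq.2 hc)
  have hσj : σ j ≠ Fin.last n := fun hc => hij (Equiv.Perm.eq_inv_iff_eq.2 hc).symm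
  -- a ≠ c and b ≠ c
  have hac : τ i ≠ τ (Fin.last n) := fun hc => hi (τ.injective hc)
  have hbc : σ j ≠ σ (Fin.last n) := fun hc => hj (σ.injective hc)
  unfold hd
  symm
  apply Finset.card_bij (fun y _ => Fin.castSucc y)
  · intro y hy
    simp only [Finset.mem_filter, Finset.mem_univ, true_and] at hy ⊢
    by_cases h1 : σ y.castSucc = Fin.last n
    · have hyi : y.castSucc = i := σ.injective (h1.trans hσi.symm)
      intro hc
      exact hτi (by rw [← hyi, ← hc, h1])
    · by_cases h2 : τ y.castSucc = Fin.last n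
      · rw [h2]; exact h1
      · intro hc
        exact hy (Fin.castSucc_injective n
          (((contract_castSucc σ y h1).trans hc).trans (contract_castSucc τ y h2).symm))
  · intro y₁ _ y₂ _ h
    exact Fin.castSucc_injective n h
  · intro x hx
    simp only [Finset.mem_filter, Finset.mem_univ, true_and] at hx
    have hxl : x ≠ Fin.last n := fun hc => hx (by rw [hc, hcd])
    obtain ⟨y, rfl⟩ := Fin.exists_castSucc_eq.2 hxl
    refine ⟨y, ?_, rfl⟩
    simp only [Finset.mem_filter, Finset.mem_univ, true_and]
    by_cases h1 : σ y.castSucc = Fin.last n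
    · -- y.castSucc = i ; contract σ y ↦ σ last, contract τ y ↦ τ y.castSucc = τ i
      have hyi : y.castSucc = i := σ.injective (h1.trans hσi.symm)
      have h2 : τ y.castSucc ≠ Fin.last n := hyi ▸ hτi
      intro hc
      have := congrArg Fin.castSucc hc
      rw [contract_of_eq_last σ y h1, contract_castSucc τ y h2] at this
      exact hac (hyi ▸ (this.symm.trans hcd))
    · by_cases h2 : τ y.castSucc = Fin.last n
      · have hyj : y.castSucc = j := τ.injective (h2.trans hτj.symm)
        intro hc
        have := congrArg Fin.castSucc hc
        rw [contract_castSucc σ y h1, contract_of_eq_last τ y h2] at this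
        exact hbc (hyj ▸ (this.trans hcd.symm))
      · intro hc
        have := congrArg Fin.castSucc hc
        rw [contract_castSucc σ y h1, contract_castSucc τ y h2] at this
        exact hx this
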